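/- Let Λ be a countably infinite set and let S, R, T be finite commutative monoids such that S is T-dual to R with duality function ψ. Then S^Λ is T-dual to R^Λ_fin with duality function Ψ; explicitly: (i) if Ψ(x₁,y) = Ψ(x₂,y) for all y ∈ R^Λ_fin then x₁ = x₂; (ii) a function f : S^Λ → T is a continuous monoid homomorphism (S^Λ with the product topology, T discrete) if and only if f = Ψ(·,y) for some y ∈ R^Λ_fin; (iii) if Ψ(x,y₁) = Ψ(x,y₂) for all x ∈ S^Λ then y₁ = y₂; (iv) a function g : R^Λ_fin → T is a monoid homomorphism if and only if g = Ψ(x,·) for some x ∈ S^Λ. -/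

import Mathlib

open Function

/-- `f` is a monoid homomorphism (as a bare function). -/
def IsMonoidHomFun {M N : Type*} [MulOneClass M] [MulOneClass N] (f : M → N) : Prop :=
  (∀ a b, f (a * b) = f a * f b) ∧ f 1 = 1

/-- The submonoid `R^Λ_fin` of `R^Λ` consisting of functions equal to the neutral element at
all but finitely many coordinates. -/
def finSuppSubmonoid (Λ R : Type*) [CommMonoid R] : Submonoid (Λ → R) where
  carrier := {y | (Function.mulSupport y).Finite}
  one_mem' := by
    simp only [Set.mem_setOf_eq]
    convert Set.finite_empty
    exact Function.mulSupport_one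
  mul_mem' := by
    intro a b ha hb
    exact Set.Finite.subset (Set.Finite.union ha hb) (Function.mulSupport_mul a b)

/-- A function equal to `1` off a finset `F` is a product of `mulSingle`s over `F`. -/
lemma decomp_mulSingle {Λ M : Type*} [DecidableEq Λ] [CommMonoid M]
    (F : Finset Λ) (g : Λ → M) (hg : ∀ j ∉ F, g j = 1) :
    g = ∏ i ∈ F, Pi.mulSingle i (g i) := by
  funext j
  symm
  rw [Finset.prod_apply]
  by_cases hj : j ∈ F
  · exact (Finset.prod_eq_single_of_mem j hj
      (fun i _ hij => Pi.mulSingle_eq_of_ne hij.symm _)).trans (Pi.mulSingle_eq_same (M := fun _ => M) j (g j))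
  · exact (Finset.prod_eq_one
      (fun i hi => Pi.mulSingle_eq_of_ne (by rintro rfl; exact hj hi) _)).trans (hg j hj).symm

/-- **Duality on product spaces.** If the finite commutative monoid `S` is `T`-dual to `R`
with duality function `ψ`, then `S^Λ` is `T`-dual to `R^Λ_fin` with the duality function
`Ψ(x,y) = ∏ᶠ i, ψ (x i) (y i)`. -/
theorem duality_on_product_spaces
    {Λ S R T : Type*} [Countable Λ] [Infinite Λ]
    [CommMonoid S] [CommMonoid R] [CommMonoid T]
    [Finite S] [Finite R] [Finite T]
    [TopologicalSpace S] [DiscreteTopology S]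
    [TopologicalSpace T] [DiscreteTopology T]
    (ψ : S → R → T)
    (hψ1 : ∀ x₁ x₂ : S, (∀ y : R, ψ x₁ y = ψ x₂ y) → x₁ = x₂)
    (hψ2 : ∀ f : S → T, IsMonoidHomFun f ↔ ∃ y : R, f = fun x => ψ x y)
    (hψ3 : ∀ y₁ y₂ : R, (∀ x : S, ψ x y₁ = ψ x y₂) → y₁ = y₂)
    (hψ4 : ∀ g : R → T, IsMonoidHomFun g ↔ ∃ x : S, g = fun y => ψ x y) :
    (∀ x₁ x₂ : Λ → S,
      (∀ y : finSuppSubmonoid Λ R,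
        (∏ᶠ i, ψ (x₁ i) (y.1 i)) = ∏ᶠ i, ψ (x₂ i) (y.1 i)) → x₁ = x₂) ∧
    (∀ f : (Λ → S) → T, (Continuous f ∧ IsMonoidHomFun f) ↔
      ∃ y : finSuppSubmonoid Λ R, f = fun x => ∏ᶠ i, ψ (x i) (y.1 i)) ∧
    (∀ y₁ y₂ : finSuppSubmonoid Λ R,
      (∀ x : Λ → S, (∏ᶠ i, ψ (x i) (y₁.1 i)) = ∏ᶠ i, ψ (x i) (y₂.1 i)) → y₁ = y₂) ∧
    (∀ g : finSuppSubmonoid Λ R → T, IsMonoidHomFun g ↔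
      ∃ x : Λ → S, g = fun y => ∏ᶠ i, ψ (x i) (y.1 i)) := by
  classical
  -- Basic homomorphism facts about ψ
  have hhomL : ∀ y : R, IsMonoidHomFun (fun x => ψ x y) := fun y => (hψ2 _).mpr ⟨y, rfl⟩
  have hhomR : ∀ x : S, IsMonoidHomFun (fun y => ψ x y) := fun x => (hψ4 _).mpr ⟨x, rfl⟩
  have hψT : ∀ x : S, ψ x 1 = 1 := fun x => (hhomR x).2
  have h1ψ : ∀ y : R, ψ 1 y = 1 := fun y => (hhomL y).2
  have hmulL : ∀ a b y, ψ (a * b) y = ψ a y * ψ b y := fun a b y => (hhomL y).1 a b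
  have hmulR : ∀ x a b, ψ x (a * b) = ψ x a * ψ x b := fun x a b => (hhomR x).1 a b
  have hmem : ∀ y : Λ → R, y ∈ finSuppSubmonoid Λ R ↔ (mulSupport y).Finite := fun _ => Iff.rfl
  have hsupp : ∀ (x : Λ → S) (y : Λ → R),
      mulSupport (fun i => ψ (x i) (y i)) ⊆ mulSupport y := by
    intro x y i hi
    simp only [mem_mulSupport] at hi ⊢
    intro h; exact hi (by rw [h, hψT])
  have hfin : ∀ (x : Λ → S) (y : finSuppSubmonoid Λ R),
      (mulSupport fun i => ψ (x i) (y.1 i)).Finite :=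
    fun x y => Set.Finite.subset ((hmem y.1).mp y.2) (hsupp x y.1)
  have hmemSingle : ∀ (i : Λ) (r : R), Pi.mulSingle i r ∈ finSuppSubmonoid Λ R := fun i r =>
    (hmem _).mpr (Set.Finite.subset (Set.finite_singleton i) Pi.mulSupport_mulSingle_subset)
  -- Evaluation at single-supported arguments
  have hPsingleR : ∀ (x : Λ → S) (i : Λ) (r : R),
      (∏ᶠ j, ψ (x j) (Pi.mulSingle (M := fun _ => R) i r j)) = ψ (x i) r := by
    intro x i r
    rw [finprod_eq_single _ i (fun j hj => by rw [Pi.mulSingle_eq_of_ne hj, hψT]),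
      Pi.mulSingle_eq_same]
  have hPsingleL : ∀ (i : Λ) (s : S) (y : Λ → R),
      (∏ᶠ j, ψ (Pi.mulSingle (M := fun _ => S) i s j) (y j)) = ψ s (y i) := by
    intro i s y
    rw [finprod_eq_single _ i (fun j hj => by rw [Pi.mulSingle_eq_of_ne hj, h1ψ]),
      Pi.mulSingle_eq_same]
  refine ⟨?_, ?_, ?_, ?_⟩
  · -- (i)
    intro x₁ x₂ h
    funext i
    refine hψ1 _ _ fun r => ?_
    have := h ⟨Pi.mulSingle i r, hmemSingle i r⟩
    rwa [hPsingleR, hPsingleR] at this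
  · -- (ii)
    intro f
    constructor
    · rintro ⟨hc, hf⟩
      set fM : (Λ → S) →* T := ⟨⟨f, hf.2⟩, hf.1⟩ with hfM
      -- get the finite set of coordinates f depends on, from continuity at 1
      have h1 : f ⁻¹' {f 1} ∈ nhds (1 : Λ → S) :=
        hc.continuousAt.preimage_mem_nhds ((isOpen_discrete _).mem_nhds rfl)
      rw [nhds_pi, Filter.mem_pi] at h1
      obtain ⟨I, hIfin, t, ht, hsub⟩ := h1
      have key : ∀ x : Λ → S, (∀ i ∈ I, x i = 1) → f x = 1 := by
        intro x hx
        have hxmem : x ∈ I.pi t := fun i hi => by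
          rw [hx i hi]; exact mem_of_mem_nhds (ht i)
        have := hsub hxmem
        simpa [hf.2] using this
      set F : Finset Λ := hIfin.toFinset with hF
      have hIF : ∀ i ∈ I, i ∈ F := fun i hi => hIfin.mem_toFinset.mpr hi
      -- choose the dual element at each coordinate
      have hx : ∀ i : Λ, ∃ yr : R, ∀ s : S, f (Pi.mulSingle i s) = ψ s yr := by
        intro i
        have hhom : IsMonoidHomFun (fun s : S => f (Pi.mulSingle i s)) := by
          constructor
          · intro a b
            show f (Pi.mulSingle i (a * b)) = _
            rw [Pi.mulSingle_mul]
            exact hf.1 _ _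
          · show f (Pi.mulSingle i (1 : S)) = 1
            rw [Pi.mulSingle_one]
            exact hf.2
        obtain ⟨yr, hyr⟩ := (hψ2 _).mp hhom
        exact ⟨yr, fun s => congrFun hyr s⟩
      choose y hyspec using hx
      have hy1 : ∀ i ∉ F, y i = 1 := by
        intro i hiF
        refine hψ3 _ _ fun s => ?_
        rw [hψT, ← hyspec i s]
        refine key _ fun j hj => ?_
        have hne : j ≠ i := by rintro rfl; exact hiF (hIF j hj)
        exact Pi.mulSingle_eq_of_ne hne _
      have hysub : mulSupport y ⊆ ↑F := fun i hi => by
        by_contra h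
        exact (mem_mulSupport.mp hi) (hy1 i h)
      have hysupp : y ∈ finSuppSubmonoid Λ R :=
        (hmem y).mpr (Set.Finite.subset F.finite_toSet hysub)
      refine ⟨⟨y, hysupp⟩, funext fun x => ?_⟩
      set xF : Λ → S := fun i => if i ∈ F then x i else 1 with hxF
      set xC : Λ → S := fun i => if i ∈ F then 1 else x i with hxC
      have hsplit : x = xF * xC := by
        funext j; by_cases hj : j ∈ F <;> simp [hxF, hxC, hj]
      have hfxC : f xC = 1 := key _ fun j hj => by simp [hxC, hIF j hj]
      have hfx : f x = f xF := by rw [hsplit, hf.1, hfxC, mul_one]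
      have hdec : xF = ∏ i ∈ F, Pi.mulSingle i (xF i) :=
        decomp_mulSingle F xF fun j hj => by simp [hxF, hj]
      have hprod : f (∏ i ∈ F, Pi.mulSingle i (xF i)) = ∏ i ∈ F, ψ (xF i) (y i) := by
        rw [show f (∏ i ∈ F, Pi.mulSingle i (xF i))
            = fM (∏ i ∈ F, Pi.mulSingle i (xF i)) from rfl, map_prod]
        exact Finset.prod_congr rfl fun i _ => hyspec i _
      calc f x = f xF := hfx
        _ = ∏ i ∈ F, ψ (xF i) (y i) := by rw [← hprod, ← hdec]
        _ = ∏ i ∈ F, ψ (x i) (y i) := Finset.prod_congr rfl fun i hi => by simp [hxF, hi]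
        _ = ∏ᶠ i, ψ (x i) (y i) :=
            (finprod_eq_prod_of_mulSupport_subset _ ((hsupp x y).trans hysub)).symm
    · rintro ⟨y, rfl⟩
      set F : Finset Λ := ((hmem y.1).mp y.2).toFinset with hF
      have hyF : mulSupport y.1 ⊆ ↑F := fun i hi => ((hmem y.1).mp y.2).mem_toFinset.mpr hi
      have heq : ∀ x : Λ → S, (∏ᶠ i, ψ (x i) (y.1 i)) = ∏ i ∈ F, ψ (x i) (y.1 i) := fun x =>
        finprod_eq_prod_of_mulSupport_subset _ ((hsupp x y.1).trans hyF)
      refine ⟨?_, ?_, ?_⟩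
      · -- continuity
        have : (fun x : Λ → S => ∏ᶠ i, ψ (x i) (y.1 i))
            = fun x => ∏ i ∈ F, ψ (x i) (y.1 i) := funext heq
        rw [this]
        exact continuous_finset_prod _ fun i _ =>
          (continuous_of_discreteTopology (f := fun s : S => ψ s (y.1 i))).comp
            (continuous_apply i)
      · -- multiplicativity
        intro a b
        simp only [Pi.mul_apply, hmulL]
        exact finprod_mul_distrib (hfin a y) (hfin b y)
      · simp only [Pi.one_apply, h1ψ, finprod_one]
  · -- (iii)
    intro y₁ y₂ h
    refine Subtype.ext (funext fun i => hψ3 _ _ fun s => ?_)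
    have := h (Pi.mulSingle i s)
    rwa [hPsingleL, hPsingleL] at this
  · -- (iv)
    intro g
    constructor
    · rintro hg
      set gM : finSuppSubmonoid Λ R →* T := ⟨⟨g, hg.2⟩, hg.1⟩ with hgM
      set eR : ∀ i : Λ, R → finSuppSubmonoid Λ R :=
        fun i r => ⟨Pi.mulSingle i r, hmemSingle i r⟩ with heR
      have hx : ∀ i : Λ, ∃ s : S, ∀ r : R, g (eR i r) = ψ s r := by
        intro i
        have : IsMonoidHomFun (fun r => g (eR i r)) := by
          constructor
          · intro a b
            have h1 : eR i (a * b) = eR i a * eR i b := by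
              apply Subtype.ext
              rw [Submonoid.coe_mul]
              exact Pi.mulSingle_mul (f := fun _ => R) i a b
            show g (eR i (a * b)) = g (eR i a) * g (eR i b)
            rw [h1]; exact hg.1 _ _
          · have h1 : eR i (1 : R) = 1 := by
              apply Subtype.ext
              show Pi.mulSingle (M := fun _ => R) i (1 : R) = (1 : Λ → R)
              exact Pi.mulSingle_one (M := fun _ => R) i
            show g (eR i 1) = 1
            rw [h1]; exact hg.2
        obtain ⟨s, hs⟩ := (hψ4 _).mp this
        exact ⟨s, fun r => congrFun hs r⟩
      choose x hxspec using hx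
      refine ⟨x, funext fun y => ?_⟩
      set F : Finset Λ := ((hmem y.1).mp y.2).toFinset with hF
      have hyF : mulSupport y.1 ⊆ ↑F := fun i hi => ((hmem y.1).mp y.2).mem_toFinset.mpr hi
      have hdec : y = ∏ i ∈ F, eR i (y.1 i) := by
        refine Subtype.ext ?_
        have := map_prod (finSuppSubmonoid Λ R).subtype (fun i => eR i (y.1 i)) F
        simp only [Submonoid.coe_subtype] at this
        rw [this]
        exact decomp_mulSingle F y.1 fun j hj => by
          by_contra h
          exact hj (hyF (mem_mulSupport.mpr h))
      calc g y = gM (∏ i ∈ F, eR i (y.1 i)) := by rw [← hdec]; rfl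
        _ = ∏ i ∈ F, g (eR i (y.1 i)) := map_prod gM _ _
        _ = ∏ i ∈ F, ψ (x i) (y.1 i) := Finset.prod_congr rfl fun i _ => hxspec i _
        _ = ∏ᶠ i, ψ (x i) (y.1 i) :=
            (finprod_eq_prod_of_mulSupport_subset _ ((hsupp x y.1).trans hyF)).symm
    · rintro ⟨x, rfl⟩
      refine ⟨?_, ?_⟩
      · intro a b
        show (∏ᶠ i, ψ (x i) ((a * b).1 i)) = _
        have : ∀ i, (a * b).1 i = a.1 i * b.1 i := fun i => rfl
        simp only [this, hmulR]
        exact finprod_mul_distrib (hfin x a) (hfin x b)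
      · show (∏ᶠ i, ψ (x i) ((1 : finSuppSubmonoid Λ R).1 i)) = 1
        have : ∀ i, (1 : finSuppSubmonoid Λ R).1 i = 1 := fun i => rfl
        simp only [this, hψT, finprod_one]
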